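/- For all integers n ≥ 1 and k ≥ 2, the sum over all d ∈ {0, 1, …, n} satisfying (d : ℝ) ≤ ((k−1)/k)·n − √(n·log n) of C(n, d)·(k−1)^d is at most k^n/n², where log denotes the real natural logarithm and C(n, d) is the binomial coefficient. -/

import Mathlib

open Real

lemma hoeffding_aux {p : ℝ} (hp0 : 0 ≤ p) (hp1 : p ≤ 1) (x : ℝ) :
    0 < 1 - p + p * Real.exp x := by
  rcases le_total (Real.exp x) 1 with h | h
  · nlinarith [Real.exp_pos x, mul_nonneg (sub_nonneg.2 hp1) (sub_nonneg.2 h)]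
  · nlinarith [mul_le_mul_of_nonneg_left h hp0]

lemma hoeffding_lemma {p : ℝ} (hp0 : 0 ≤ p) (hp1 : p ≤ 1) (s : ℝ) :
    1 - p + p * Real.exp s ≤ Real.exp (p * s + s ^ 2 / 8) := by
  set u : ℝ → ℝ := fun x => 1 - p + p * Real.exp x with hu_def
  have hu : ∀ x, 0 < u x := fun x => hoeffding_aux hp0 hp1 x
  have hu' : ∀ x, HasDerivAt u (p * Real.exp x) x := fun x =>
    ((Real.hasDerivAt_exp x).const_mul p).const_add (1 - p)
  set g : ℝ → ℝ := fun x => p * x + x ^ 2 / 8 - Real.log (u x) with hg_def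
  set φ : ℝ → ℝ := fun x => p + x / 4 - p * Real.exp x / u x with hφ_def
  set ψ : ℝ → ℝ := fun x => 1 / 4 - p * (1 - p) * Real.exp x / (u x) ^ 2 with hψ_def
  have hg : ∀ x, HasDerivAt g (φ x) x := by
    intro x
    have hlog : HasDerivAt (fun y => Real.log (u y)) (p * Real.exp x / u x) x :=
      (hu' x).log (hu x).ne'
    have h1 : HasDerivAt (fun y : ℝ => p * y + y ^ 2 / 8)
        (p * 1 + 2 * x ^ 1 / 8) x :=
      ((hasDerivAt_id x).const_mul p).add ((hasDerivAt_pow 2 x).div_const 8)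
    have := h1.sub hlog
    refine this.congr_deriv ?_
    simp [hφ_def]; ring
  have hφ : ∀ x, HasDerivAt φ (ψ x) x := by
    intro x
    have hq : HasDerivAt (fun y => p * Real.exp y / u y)
        ((p * Real.exp x * u x - p * Real.exp x * (p * Real.exp x)) / (u x) ^ 2) x :=
      ((Real.hasDerivAt_exp x).const_mul p).div (hu' x) (hu x).ne'
    have h1 : HasDerivAt (fun y : ℝ => p + y / 4) (1 / 4) x :=
      ((hasDerivAt_id x).div_const 4).const_add p
    have := h1.sub hq
    refine this.congr_deriv ?_
    have hnum : p * Real.exp x * u x - p * Real.exp x * (p * Real.exp x)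
        = p * (1 - p) * Real.exp x := by
      simp only [hu_def]; ring
    rw [hψ_def, hnum]
  have hψ0 : ∀ x, 0 ≤ ψ x := by
    intro x
    have h2 : 0 < (u x) ^ 2 := pow_pos (hu x) 2
    rw [hψ_def]
    have : p * (1 - p) * Real.exp x / (u x) ^ 2 ≤ 1 / 4 := by
      rw [div_le_iff₀ h2]
      have := sq_nonneg ((1 - p) - p * Real.exp x)
      simp only [hu_def]
      nlinarith
    linarith
  have hφmono : Monotone φ :=
    monotone_of_deriv_nonneg (fun x => (hφ x).differentiableAt)
      (fun x => by rw [(hφ x).deriv]; exact hψ0 x)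
  have hφ0 : φ 0 = 0 := by
    simp [hφ_def, hu_def, Real.exp_zero]
  have hg0 : g 0 = 0 := by
    simp [hg_def, hu_def, Real.exp_zero]
  have hgnonneg : ∀ x, 0 ≤ g x := by
    intro x
    rcases le_total 0 x with h | h
    · have hmono : MonotoneOn g (Set.Ici (0 : ℝ)) := by
        apply monotoneOn_of_deriv_nonneg (convex_Ici 0)
        · exact fun y _ => ((hg y).differentiableAt).continuousAt.continuousWithinAt
        · exact fun y _ => ((hg y).differentiableAt).differentiableWithinAt
        · intro y hy
          rw [(hg y).deriv]
          have : (0 : ℝ) ≤ y := le_of_lt (by simpa using hy)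
          calc (0 : ℝ) = φ 0 := hφ0.symm
            _ ≤ φ y := hφmono this
      have := hmono (Set.self_mem_Ici) (Set.mem_Ici.2 h) h
      rw [hg0] at this; exact this
    · have hanti : AntitoneOn g (Set.Iic (0 : ℝ)) := by
        apply antitoneOn_of_deriv_nonpos (convex_Iic 0)
        · exact fun y _ => ((hg y).differentiableAt).continuousAt.continuousWithinAt
        · exact fun y _ => ((hg y).differentiableAt).differentiableWithinAt
        · intro y hy
          rw [(hg y).deriv]
          have hy0 : y ≤ (0 : ℝ) := le_of_lt (by simpa using hy)
          calc φ y ≤ φ 0 := hφmono hy0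
            _ = 0 := hφ0
      have := hanti (Set.mem_Iic.2 h) Set.self_mem_Iic h
      rw [hg0] at this; exact this
  have := hgnonneg s
  have hlog_le : Real.log (u s) ≤ p * s + s ^ 2 / 8 := by
    simp only [hg_def] at this; linarith
  calc 1 - p + p * Real.exp s = u s := rfl
    _ = Real.exp (Real.log (u s)) := (Real.exp_log (hu s)).symm
    _ ≤ Real.exp (p * s + s ^ 2 / 8) := Real.exp_le_exp.2 hlog_le

theorem small_improvement_sets_bound (n k : ℕ) (hn : 1 ≤ n) (hk : 2 ≤ k) :
    ∑ d ∈ (Finset.range (n + 1)).filter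
        (fun d : ℕ => (d : ℝ) ≤ ((k : ℝ) - 1) / k * n - Real.sqrt (n * Real.log n)),
      (n.choose d : ℝ) * ((k : ℝ) - 1) ^ d ≤ (k : ℝ) ^ n / (n : ℝ) ^ 2 := by
  have hn1 : (1 : ℝ) ≤ n := by exact_mod_cast hn
  have hnpos : (0 : ℝ) < n := by linarith
  have hlogn : 0 ≤ Real.log n := Real.log_nonneg hn1
  set t := Real.sqrt (n * Real.log n) with ht_def
  have ht0 : 0 ≤ t := Real.sqrt_nonneg _
  have ht2 : t ^ 2 = n * Real.log n := Real.sq_sqrt (by positivity)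
  set s := 4 * t / n with hs_def
  have hs0 : 0 ≤ s := by positivity
  have hk2 : (2 : ℝ) ≤ k := by exact_mod_cast hk
  have hkpos : (0 : ℝ) < k := by linarith
  set K := (k : ℝ) - 1 with hK_def
  have hK1 : (1 : ℝ) ≤ K := by rw [hK_def]; linarith
  set p := K / k with hp_def
  have hp0 : 0 ≤ p := by positivity
  have hp1 : p ≤ 1 := by rw [hp_def, div_le_one hkpos]; rw [hK_def]; linarith
  set x := Real.exp (-s) with hx_def
  have hx0 : 0 < x := Real.exp_pos _
  set M := K / k * n - t with hM_def
  -- term bound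
  have hterm : ∀ d ∈ (Finset.range (n + 1)).filter
      (fun d : ℕ => (d : ℝ) ≤ K / k * n - t),
      (n.choose d : ℝ) * K ^ d ≤ (n.choose d : ℝ) * (K * x) ^ d * Real.exp (s * M) := by
    intro d hd
    have hdM : (d : ℝ) ≤ M := by
      have := (Finset.mem_filter.1 hd).2
      rw [hM_def]; exact this
    have hxd : x ^ d = Real.exp ((d : ℝ) * (-s)) := by
      rw [hx_def, Real.exp_nat_mul]
    have key : (1 : ℝ) ≤ Real.exp ((d : ℝ) * (-s)) * Real.exp (s * M) := by
      rw [← Real.exp_add, ← Real.exp_zero]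
      apply Real.exp_le_exp.2
      have : 0 ≤ s * (M - d) := mul_nonneg hs0 (by linarith)
      nlinarith
    have hc : (0 : ℝ) ≤ (n.choose d : ℝ) * K ^ d := by positivity
    calc (n.choose d : ℝ) * K ^ d
        = (n.choose d : ℝ) * K ^ d * 1 := by ring
      _ ≤ (n.choose d : ℝ) * K ^ d * (Real.exp ((d : ℝ) * (-s)) * Real.exp (s * M)) :=
          mul_le_mul_of_nonneg_left key hc
      _ = (n.choose d : ℝ) * (K * x) ^ d * Real.exp (s * M) := by
          rw [mul_pow, hxd]; ring
  calc ∑ d ∈ (Finset.range (n + 1)).filter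
        (fun d : ℕ => (d : ℝ) ≤ K / k * n - t),
      (n.choose d : ℝ) * K ^ d
      ≤ ∑ d ∈ (Finset.range (n + 1)).filter
        (fun d : ℕ => (d : ℝ) ≤ K / k * n - t),
      (n.choose d : ℝ) * (K * x) ^ d * Real.exp (s * M) := Finset.sum_le_sum hterm
    _ ≤ ∑ d ∈ Finset.range (n + 1),
      (n.choose d : ℝ) * (K * x) ^ d * Real.exp (s * M) := by
        apply Finset.sum_le_sum_of_subset_of_nonneg (Finset.filter_subset _ _)
        intro i _ _
        positivity
    _ = (K * x + 1) ^ n * Real.exp (s * M) := by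
        rw [← Finset.sum_mul]
        congr 1
        rw [add_pow]
        apply Finset.sum_congr rfl
        intro i _
        ring
    _ ≤ ((k : ℝ) * Real.exp (p * (-s) + (-s) ^ 2 / 8)) ^ n * Real.exp (s * M) := by
        apply mul_le_mul_of_nonneg_right _ (Real.exp_pos _).le
        apply pow_le_pow_left₀ (by positivity)
        have heq : K * x + 1 = (k : ℝ) * (1 - p + p * x) := by
          rw [hp_def, hK_def]
          field_simp
          ring
        rw [heq]
        have := hoeffding_lemma hp0 hp1 (-s)
        rw [← hx_def] at this
        exact mul_le_mul_of_nonneg_left this hkpos.le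
    _ = (k : ℝ) ^ n * Real.exp ((n : ℝ) * (p * (-s) + (-s) ^ 2 / 8) + s * M) := by
        rw [mul_pow, ← Real.exp_nat_mul, mul_assoc, ← Real.exp_add]
    _ = (k : ℝ) ^ n / (n : ℝ) ^ 2 := by
        have hexp : (n : ℝ) * (p * (-s) + (-s) ^ 2 / 8) + s * M = -(2 * Real.log n) := by
          rw [hM_def, hp_def, hs_def]
          have hne : (n : ℝ) ≠ 0 := hnpos.ne'
          field_simp
          linear_combination (-16 * (k : ℝ)) * ht2
        rw [hexp, Real.exp_neg]
        have h2 : Real.exp (2 * Real.log n) = (n : ℝ) ^ 2 := by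
          rw [two_mul, Real.exp_add, Real.exp_log hnpos, sq]
        rw [h2, div_eq_mul_inv]
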